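/- arXiv:1007.1366 — 2 statements merged into one kernel-verified Lean document; each statement's English description precedes it below -/
import Mathlib

section
/- For each n ≥ 2 let U^{(n)} be Haar distributed on the unitary group U(n) and set T^{(n)}_{p,q} = Σ_{i≤p, j≤q} |U^{(n)}_{ij}|². Then max_{0≤p,q≤n} |(1/n) T^{(n)}_{p,q} − pq/n²| converges to 0 in probability as n → ∞, i.e. for every ε > 0 the Haar probability that this maximum exceeds ε tends to 0. -/
set_option linter.unusedSectionVars false
set_option linter.unusedVariables false
open scoped ENNReal


open MeasureTheory Matrix Filter

/-- The entrywise (Borel) measurable structure on matrices. -/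
instance matrixMeasurableSpace {m n α : Type*} [MeasurableSpace α] :
    MeasurableSpace (Matrix m n α) :=
  inferInstanceAs (MeasurableSpace (m → n → α))

/-- `T_{p,q} = Σ_{1 ≤ i ≤ p, 1 ≤ j ≤ q} |U_{ij}|²` (equal to `0` if `p = 0` or `q = 0`). -/
noncomputable def truncTraceU (n p q : ℕ) (U : Matrix.unitaryGroup (Fin n) ℂ) : ℝ :=
  ∑ i : Fin n, ∑ j : Fin n,
    if (i : ℕ) < p ∧ (j : ℕ) < q then ‖(U : Matrix (Fin n) (Fin n) ℂ) i j‖ ^ 2 else 0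


namespace TTU

abbrev UG (n : ℕ) := Matrix.unitaryGroup (Fin n) ℂ

variable {n : ℕ}

noncomputable def f (i j : Fin n) (U : UG n) : ℝ :=
  ‖(U : Matrix (Fin n) (Fin n) ℂ) i j‖ ^ 2

lemma f_nonneg (i j : Fin n) (U : UG n) : 0 ≤ f i j U := sq_nonneg _

lemma measurable_f (i j : Fin n) : Measurable (f i j) := by
  apply Measurable.pow_const
  apply Measurable.norm
  exact (measurable_pi_apply j).comp ((measurable_pi_apply i).comp measurable_subtype_coe)

lemma row_sum (U : UG n) (i : Fin n) : ∑ j, f i j U = 1 := by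
  have h : (U : Matrix (Fin n) (Fin n) ℂ) * star (U : Matrix (Fin n) (Fin n) ℂ) = 1 :=
    Matrix.mem_unitaryGroup_iff.mp U.2
  have h2 := congrArg (fun M : Matrix (Fin n) (Fin n) ℂ => M i i) h
  simp only [Matrix.mul_apply, Matrix.star_apply, Matrix.one_apply_eq] at h2
  have h3 : ∀ j, (U : Matrix (Fin n) (Fin n) ℂ) i j * star ((U : Matrix (Fin n) (Fin n) ℂ) i j)
      = ((f i j U : ℝ) : ℂ) := by
    intro j
    rw [Complex.star_def, Complex.mul_conj]
    norm_cast
    simp [f, Complex.normSq_eq_norm_sq]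
  rw [Finset.sum_congr rfl (fun j _ => h3 j)] at h2
  rw [← Complex.ofReal_sum] at h2
  exact_mod_cast h2

lemma col_sum (U : UG n) (j : Fin n) : ∑ i, f i j U = 1 := by
  have h : star (U : Matrix (Fin n) (Fin n) ℂ) * (U : Matrix (Fin n) (Fin n) ℂ) = 1 :=
    Matrix.mem_unitaryGroup_iff'.mp U.2
  have h2 := congrArg (fun M : Matrix (Fin n) (Fin n) ℂ => M j j) h
  simp only [Matrix.mul_apply, Matrix.star_apply, Matrix.one_apply_eq] at h2
  have h3 : ∀ i, star ((U : Matrix (Fin n) (Fin n) ℂ) i j) * (U : Matrix (Fin n) (Fin n) ℂ) i j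
      = ((f i j U : ℝ) : ℂ) := by
    intro i
    rw [Complex.star_def, mul_comm, Complex.mul_conj]
    norm_cast
    simp [f, Complex.normSq_eq_norm_sq]
  rw [Finset.sum_congr rfl (fun i _ => h3 i)] at h2
  rw [← Complex.ofReal_sum] at h2
  exact_mod_cast h2

lemma f_le_one (i j : Fin n) (U : UG n) : f i j U ≤ 1 := by
  calc f i j U ≤ ∑ j', f i j' U :=
        Finset.single_le_sum (fun j' _ => f_nonneg i j' U) (Finset.mem_univ j)
    _ = 1 := row_sum U i


lemma measurable_entry (i j : Fin n) :
    Measurable fun U : UG n => (U : Matrix (Fin n) (Fin n) ℂ) i j :=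
  (measurable_pi_apply j).comp ((measurable_pi_apply i).comp measurable_subtype_coe)

instance : MeasurableMul (UG n) := by
  have key : ∀ (c : UG n), Measurable fun x : UG n =>
      ((c : Matrix (Fin n) (Fin n) ℂ) * (x : Matrix (Fin n) (Fin n) ℂ)) := by
    intro c
    apply measurable_pi_lambda; intro i
    apply measurable_pi_lambda; intro j
    simp only [Matrix.mul_apply]
    exact Finset.measurable_sum _ fun k _ => (measurable_entry k j).const_mul _
  have key2 : ∀ (c : UG n), Measurable fun x : UG n =>
      ((x : Matrix (Fin n) (Fin n) ℂ) * (c : Matrix (Fin n) (Fin n) ℂ)) := by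
    intro c
    apply measurable_pi_lambda; intro i
    apply measurable_pi_lambda; intro j
    simp only [Matrix.mul_apply]
    exact Finset.measurable_sum _ fun k _ => (measurable_entry i k).mul_const _
  constructor
  · intro c; exact Measurable.subtype_mk (key c)
  · intro c; exact Measurable.subtype_mk (key2 c)

lemma star_permMatrix (σ : Equiv.Perm (Fin n)) :
    star (σ.permMatrix ℂ) = (σ⁻¹).permMatrix ℂ := by
  ext i j
  simp only [Matrix.star_apply, Equiv.Perm.permMatrix, PEquiv.toMatrix_apply,
    Equiv.toPEquiv_apply, Option.mem_def, Option.some.injEq, apply_ite, star_one, star_zero,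
    Equiv.Perm.inv_def, Equiv.symm_apply_eq]
  by_cases h : i = σ j
  · simp [h]
  · rw [if_neg h, if_neg (fun h' : σ j = i => h h'.symm)]

lemma one_permMatrix : ((1 : Equiv.Perm (Fin n)).toPEquiv.toMatrix : Matrix (Fin n) (Fin n) ℂ) = 1 := by
  rw [show (1 : Equiv.Perm (Fin n)) = Equiv.refl _ from rfl, Equiv.toPEquiv_refl,
    PEquiv.toMatrix_refl]

lemma permMatrix_mem (σ : Equiv.Perm (Fin n)) :
    (σ.permMatrix ℂ) ∈ unitary (Matrix (Fin n) (Fin n) ℂ) := by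
  constructor
  · rw [star_permMatrix]
    show ((σ⁻¹).toPEquiv.toMatrix : Matrix _ _ ℂ) * σ.toPEquiv.toMatrix = 1
    rw [← PEquiv.toMatrix_trans, ← Equiv.toPEquiv_trans]
    simp [one_permMatrix, Equiv.Perm.inv_def]
  · rw [star_permMatrix]
    show (σ.toPEquiv.toMatrix : Matrix _ _ ℂ) * (σ⁻¹).toPEquiv.toMatrix = 1
    rw [← PEquiv.toMatrix_trans, ← Equiv.toPEquiv_trans]
    simp [one_permMatrix, Equiv.Perm.inv_def]

noncomputable def permU (σ : Equiv.Perm (Fin n)) : UG n := ⟨σ.permMatrix ℂ, permMatrix_mem σ⟩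

lemma permU_mul_apply (σ : Equiv.Perm (Fin n)) (U : UG n) (i j : Fin n) :
    ((permU σ * U : UG n) : Matrix (Fin n) (Fin n) ℂ) i j
      = (U : Matrix (Fin n) (Fin n) ℂ) (σ i) j := by
  show ((σ.permMatrix ℂ) * (U : Matrix (Fin n) (Fin n) ℂ)) i j = _
  rw [Equiv.Perm.permMatrix, PEquiv.toMatrix_toPEquiv_mul]
  rfl

lemma f_permU (σ : Equiv.Perm (Fin n)) (U : UG n) (i j : Fin n) :
    f i j (permU σ * U) = f (σ i) j U := by
  rw [f, f, permU_mul_apply]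

section Measure

variable (μ : Measure (UG n)) [IsProbabilityMeasure μ] [μ.IsMulLeftInvariant]

lemma integral_perm (σ : Equiv.Perm (Fin n)) (F : UG n → ℝ) :
    ∫ U, F (permU σ * U) ∂μ = ∫ U, F U ∂μ :=
  integral_mul_left_eq_self F _

lemma integrable_bdd {F : UG n → ℝ} (hF : Measurable F) (C : ℝ) (hC : ∀ U, |F U| ≤ C) :
    Integrable F μ :=
  (integrable_const C).mono' hF.aestronglyMeasurable (Filter.Eventually.of_forall hC)

lemma integrable_f (i j : Fin n) : Integrable (f i j) μ :=
  integrable_bdd μ (measurable_f i j) 1 (fun U => by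
    rw [abs_of_nonneg (f_nonneg i j U)]; exact f_le_one i j U)

lemma integrable_ff (i j k l : Fin n) : Integrable (fun U => f i j U * f k l U) μ :=
  integrable_bdd μ ((measurable_f i j).mul (measurable_f k l)) 1 (fun U => by
    rw [abs_of_nonneg (mul_nonneg (f_nonneg i j U) (f_nonneg k l U))]
    calc f i j U * f k l U ≤ 1 * 1 :=
          mul_le_mul (f_le_one i j U) (f_le_one k l U) (f_nonneg k l U) zero_le_one
      _ = 1 := by ring)

lemma integral_f_eq (i i' j : Fin n) : ∫ U, f i j U ∂μ = ∫ U, f i' j U ∂μ := by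
  have := integral_perm μ (Equiv.swap i' i) (f i' j)
  simp only [f_permU, Equiv.swap_apply_left] at this
  exact this

lemma integral_f (i j : Fin n) : ∫ U, f i j U ∂μ = 1 / n := by
  have hn : 0 < n := i.pos
  have h1 : (∑ i' : Fin n, ∫ U, f i' j U ∂μ) = 1 := by
    rw [← integral_finset_sum _ (fun i' _ => integrable_f μ i' j)]
    have hc : ∀ U : UG n, (∑ i' : Fin n, f i' j U) = 1 := fun U => col_sum U j
    simp only [hc, integral_const, measure_univ, ENNReal.toReal_one, probReal_univ, smul_eq_mul, mul_one]
  rw [Finset.sum_congr rfl (fun i' _ => integral_f_eq μ i' i j)] at h1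
  simp only [Finset.sum_const, Finset.card_univ, Fintype.card_fin, nsmul_eq_mul] at h1
  field_simp at h1 ⊢
  linarith

noncomputable def F2 (i j k l : Fin n) : ℝ := ∫ U, f i j U * f k l U ∂μ

lemma F2_nonneg (i j k l : Fin n) : 0 ≤ F2 μ i j k l :=
  integral_nonneg fun U => mul_nonneg (f_nonneg i j U) (f_nonneg k l U)

lemma F2_perm (σ : Equiv.Perm (Fin n)) (i j k l : Fin n) :
    F2 μ (σ i) j (σ k) l = F2 μ i j k l := by
  have := integral_perm μ σ (fun U => f i j U * f k l U)
  simp only [f_permU] at this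
  exact this

lemma two_perm {i k i' k' : Fin n} (h : i ≠ k) (h' : i' ≠ k') :
    ∃ σ : Equiv.Perm (Fin n), σ i' = i ∧ σ k' = k := by
  classical
  set τ := Equiv.swap i i' with hτ
  have hτi' : τ i' = i := Equiv.swap_apply_right i i'
  set k'' := τ k' with hk''
  have hk''i : k'' ≠ i := by
    intro hc
    exact h' (τ.injective (by rw [hτi', ← hc] : τ k' = τ i')).symm
  set ρ := Equiv.swap k k'' with hρ
  refine ⟨τ.trans ρ, ?_, ?_⟩
  · show ρ (τ i') = i
    rw [hτi']
    exact Equiv.swap_apply_of_ne_of_ne h (Ne.symm hk''i)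
  · show ρ (τ k') = k
    rw [← hk'']
    exact Equiv.swap_apply_right k k''

lemma F2_offdiag_eq {i k i' k' : Fin n} (j l : Fin n) (h : i ≠ k) (h' : i' ≠ k') :
    F2 μ i j k l = F2 μ i' j k' l := by
  obtain ⟨σ, h1, h2⟩ := two_perm h h'
  rw [← h1, ← h2, F2_perm]

lemma F2_diag_le (i j : Fin n) : F2 μ i j i j ≤ 1 / n := by
  rw [← integral_f μ i j]
  apply integral_mono (integrable_ff μ i j i j) (integrable_f μ i j)
  intro U
  calc f i j U * f i j U ≤ 1 * f i j U :=
        mul_le_mul_of_nonneg_right (f_le_one i j U) (f_nonneg i j U)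
    _ = f i j U := one_mul _

lemma F2_diag_ge (i j : Fin n) : 1 / (n : ℝ) ^ 2 ≤ F2 μ i j i j := by
  have heval : ∫ U, (2/(n:ℝ) * f i j U - (1/(n:ℝ))^2) ∂μ = 2/(n:ℝ)*(1/n) - (1/n)^2 := by
    rw [integral_sub ((integrable_f μ i j).const_mul _) (integrable_const _),
      integral_const_mul, integral_f, integral_const]
    simp
  have hint : Integrable (fun U : UG n => 2/(n:ℝ) * f i j U - (1/(n:ℝ))^2) μ :=
    ((integrable_f μ i j).const_mul _).sub (integrable_const _)
  have hmono : ∫ U, (2/(n:ℝ) * f i j U - (1/(n:ℝ))^2) ∂μ ≤ F2 μ i j i j := by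
    apply integral_mono hint (integrable_ff μ i j i j)
    intro U
    have hsq := sq_nonneg (f i j U - 1/(n:ℝ))
    have h2 : (f i j U - 1/(n:ℝ))^2
        = f i j U * f i j U - 2/(n:ℝ)*f i j U + (1/(n:ℝ))^2 := by ring
    simp only [Pi.sub_apply]
    rw [h2] at hsq
    linarith [hsq]
  have hid : (1:ℝ) / (n:ℝ)^2 = 2/(n:ℝ)*(1/n) - (1/n)^2 := by ring
  rw [hid, ← heval]
  exact hmono

lemma col_identity (j l : Fin n) : ∑ i : Fin n, ∑ k : Fin n, F2 μ i j k l = 1 := by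
  have h : ∀ U : UG n, (∑ i, f i j U) * (∑ k, f k l U) = 1 := by
    intro U; simp [col_sum]
  have h2 : ∀ U : UG n, (∑ i : Fin n, ∑ k : Fin n, f i j U * f k l U) = 1 := by
    intro U; rw [← h U, Finset.sum_mul_sum]
  have h3 : (∑ i : Fin n, ∑ k : Fin n, F2 μ i j k l)
      = ∫ U, (∑ i : Fin n, ∑ k : Fin n, f i j U * f k l U) ∂μ := by
    rw [integral_finset_sum _ (fun i _ => integrable_finset_sum _
      (fun k _ => integrable_ff μ i j k l))]
    exact Finset.sum_congr rfl fun i _ =>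
      (integral_finset_sum _ (fun k _ => integrable_ff μ i j k l)).symm
  rw [h3, integral_congr_ae (Filter.Eventually.of_forall h2)]
  simp

lemma row_identity (i : Fin n) : ∑ j : Fin n, ∑ l : Fin n, F2 μ i j i l = 1 := by
  have h : ∀ U : UG n, (∑ j, f i j U) * (∑ l, f i l U) = 1 := by
    intro U; simp [row_sum]
  have h2 : ∀ U : UG n, (∑ j : Fin n, ∑ l : Fin n, f i j U * f i l U) = 1 := by
    intro U; rw [← h U, Finset.sum_mul_sum]
  have h3 : (∑ j : Fin n, ∑ l : Fin n, F2 μ i j i l)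
      = ∫ U, (∑ j : Fin n, ∑ l : Fin n, f i j U * f i l U) ∂μ := by
    rw [integral_finset_sum _ (fun j _ => integrable_finset_sum _
      (fun l _ => integrable_ff μ i j i l))]
    exact Finset.sum_congr rfl fun j _ =>
      (integral_finset_sum _ (fun l _ => integrable_ff μ i j i l)).symm
  rw [h3, integral_congr_ae (Filter.Eventually.of_forall h2)]
  simp

lemma F2_offdiag_le {i k : Fin n} (j l : Fin n) (h : i ≠ k) :
    F2 μ i j k l ≤ 1 / (n * (n - 1) : ℝ) := by
  have hn2 : 2 ≤ n := by
    by_contra hc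
    push_neg at hc
    interval_cases n
    · exact absurd i.pos (by simp)
    · exact h (Subsingleton.elim i k)
  have hn1 : (1:ℝ) ≤ (n:ℝ) - 1 := by
    have : (2:ℝ) ≤ n := by exact_mod_cast hn2
    linarith
  have key : (n : ℝ) * ((n:ℝ) - 1) * F2 μ i j k l
      ≤ ∑ i' : Fin n, ∑ k' : Fin n, F2 μ i' j k' l := by
    have hdrop : ∀ i' : Fin n, ((n:ℝ) - 1) * F2 μ i j k l ≤ ∑ k' : Fin n, F2 μ i' j k' l := by
      intro i'
      rw [← Finset.add_sum_erase _ _ (Finset.mem_univ i')]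
      have he : ∀ k' ∈ Finset.univ.erase i', F2 μ i' j k' l = F2 μ i j k l := by
        intro k' hk'
        exact F2_offdiag_eq μ j l (Ne.symm (Finset.ne_of_mem_erase hk')) h
      rw [Finset.sum_congr rfl he, Finset.sum_const, Finset.card_erase_of_mem (Finset.mem_univ i'),
        Finset.card_univ, Fintype.card_fin, nsmul_eq_mul]
      have h1n : 1 ≤ n := i'.pos
      rw [Nat.cast_sub h1n, Nat.cast_one]
      nlinarith [F2_nonneg μ i' j i' l]
    calc (n:ℝ) * ((n:ℝ) - 1) * F2 μ i j k l
        = ∑ _i' : Fin n, ((n:ℝ) - 1) * F2 μ i j k l := by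
          rw [Finset.sum_const, Finset.card_univ, Fintype.card_fin, nsmul_eq_mul]; ring
      _ ≤ ∑ i' : Fin n, ∑ k' : Fin n, F2 μ i' j k' l :=
          Finset.sum_le_sum fun i' _ => hdrop i'
  rw [col_identity μ j l] at key
  have hpos : (0:ℝ) < (n:ℝ) * ((n:ℝ) - 1) := by
    have : (2:ℝ) ≤ (n:ℝ) := by exact_mod_cast hn2
    nlinarith
  rw [div_eq_inv_mul, le_inv_mul_iff₀ hpos]
  linarith [key]

lemma rowpair_bound (i : Fin n) (hn : 0 < n) :
    ∑ j : Fin n, ∑ l ∈ Finset.univ.erase j, F2 μ i j i l ≤ 1 - 1 / n := by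
  have h := row_identity μ i
  have hsplit : ∀ j : Fin n, ∑ l : Fin n, F2 μ i j i l
      = F2 μ i j i j + ∑ l ∈ Finset.univ.erase j, F2 μ i j i l :=
    fun j => (Finset.add_sum_erase _ _ (Finset.mem_univ j)).symm
  rw [Finset.sum_congr rfl (fun j _ => hsplit j), Finset.sum_add_distrib] at h
  have hdiag : (1:ℝ) / n ≤ ∑ j : Fin n, F2 μ i j i j := by
    have : ∀ j : Fin n, 1 / (n:ℝ)^2 ≤ F2 μ i j i j := fun j => F2_diag_ge μ i j
    calc (1:ℝ)/n = ∑ _j : Fin n, 1/(n:ℝ)^2 := by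
          rw [Finset.sum_const, Finset.card_univ, Fintype.card_fin, nsmul_eq_mul]
          field_simp
      _ ≤ _ := Finset.sum_le_sum fun j _ => this j
  linarith

lemma colpair_bound (j : Fin n) (hn : 0 < n) :
    ∑ i : Fin n, ∑ k ∈ Finset.univ.erase i, F2 μ i j k j ≤ 1 - 1 / n := by
  have h := col_identity μ j j
  have hsplit : ∀ i : Fin n, ∑ k : Fin n, F2 μ i j k j
      = F2 μ i j i j + ∑ k ∈ Finset.univ.erase i, F2 μ i j k j :=
    fun i => (Finset.add_sum_erase _ _ (Finset.mem_univ i)).symm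
  rw [Finset.sum_congr rfl (fun i _ => hsplit i), Finset.sum_add_distrib] at h
  have hdiag : (1:ℝ) / n ≤ ∑ i : Fin n, F2 μ i j i j := by
    have : ∀ i : Fin n, 1 / (n:ℝ)^2 ≤ F2 μ i j i j := fun i => F2_diag_ge μ i j
    calc (1:ℝ)/n = ∑ _i : Fin n, 1/(n:ℝ)^2 := by
          rw [Finset.sum_const, Finset.card_univ, Fintype.card_fin, nsmul_eq_mul]
          field_simp
      _ ≤ _ := Finset.sum_le_sum fun i _ => this i
  linarith

end Measure

def fps (n p : ℕ) : Finset (Fin n) := Finset.univ.filter fun i => (i:ℕ) < p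

lemma card_fps {p : ℕ} (hp : p ≤ n) : (fps n p).card = p := by
  have himg : (fps n p).map Fin.valEmbedding = Finset.range p := by
    ext x
    simp only [Finset.mem_map, Finset.mem_range, fps, Finset.mem_filter, Finset.mem_univ,
      true_and, Fin.valEmbedding_apply]
    constructor
    · rintro ⟨i, hi, rfl⟩; exact hi
    · intro hx; exact ⟨⟨x, lt_of_lt_of_le hx hp⟩, hx, rfl⟩
  calc (fps n p).card = ((fps n p).map Fin.valEmbedding).card := (Finset.card_map _).symm
    _ = p := by rw [himg, Finset.card_range]

lemma truncTrace_eq (p q : ℕ) (U : UG n) :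
    truncTraceU n p q U = ∑ i ∈ fps n p, ∑ j ∈ fps n q, f i j U := by
  rw [truncTraceU]
  simp only [fps, Finset.sum_filter]
  refine Finset.sum_congr rfl fun i _ => ?_
  by_cases hi : (i:ℕ) < p
  · rw [if_pos hi]
    refine Finset.sum_congr rfl fun j _ => ?_
    by_cases hj : (j:ℕ) < q <;> simp [hi, hj, f]
  · rw [if_neg hi]
    refine Finset.sum_eq_zero fun j _ => ?_
    simp [hi]

lemma T_nonneg (p q : ℕ) (U : UG n) : 0 ≤ truncTraceU n p q U := by
  rw [truncTrace_eq]
  exact Finset.sum_nonneg fun i _ => Finset.sum_nonneg fun j _ => f_nonneg i j U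

lemma T_mono {p q p' q' : ℕ} (hp : p ≤ p') (hq : q ≤ q') (U : UG n) :
    truncTraceU n p q U ≤ truncTraceU n p' q' U := by
  rw [truncTraceU, truncTraceU]
  refine Finset.sum_le_sum fun i _ => Finset.sum_le_sum fun j _ => ?_
  by_cases h : (i:ℕ) < p ∧ (j:ℕ) < q
  · rw [if_pos h, if_pos ⟨lt_of_lt_of_le h.1 hp, lt_of_lt_of_le h.2 hq⟩]
  · rw [if_neg h]
    by_cases h' : (i:ℕ) < p' ∧ (j:ℕ) < q'
    · rw [if_pos h']; exact sq_nonneg _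
    · rw [if_neg h']

lemma measurable_T (p q : ℕ) : Measurable (truncTraceU n p q) := by
  have : truncTraceU n p q = fun U => ∑ i ∈ fps n p, ∑ j ∈ fps n q, f i j U := by
    funext U; exact truncTrace_eq p q U
  rw [this]
  exact Finset.measurable_sum _ fun i _ => Finset.measurable_sum _ fun j _ => measurable_f i j

lemma T_le (p q : ℕ) (U : UG n) : truncTraceU n p q U ≤ (n:ℝ)^2 := by
  rw [truncTrace_eq]
  calc ∑ i ∈ fps n p, ∑ j ∈ fps n q, f i j U
      ≤ ∑ _i ∈ fps n p, ∑ _j ∈ fps n q, (1:ℝ) :=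
        Finset.sum_le_sum fun i _ => Finset.sum_le_sum fun j _ => f_le_one i j U
    _ ≤ (n:ℝ)^2 := by
        simp only [Finset.sum_const, nsmul_eq_mul, mul_one]
        have h1 : (fps n p).card ≤ n := le_trans (Finset.card_le_card (Finset.filter_subset _ _))
          (by simp)
        have h2 : (fps n q).card ≤ n := le_trans (Finset.card_le_card (Finset.filter_subset _ _))
          (by simp)
        have h1' : ((fps n p).card : ℝ) ≤ (n:ℝ) := by exact_mod_cast h1
        have h2' : ((fps n q).card : ℝ) ≤ (n:ℝ) := by exact_mod_cast h2
        have hnn : (0:ℝ) ≤ ((fps n q).card : ℝ) := by positivity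
        have hnn2 : (0:ℝ) ≤ (n:ℝ) := by positivity
        calc ((fps n p).card : ℝ) * ((fps n q).card : ℝ) ≤ (n:ℝ)*(n:ℝ) :=
              mul_le_mul h1' h2' hnn hnn2
          _ = (n:ℝ)^2 := by ring

section Measure2

variable (μ : Measure (UG n)) [IsProbabilityMeasure μ] [μ.IsMulLeftInvariant]

lemma integrable_T (p q : ℕ) : Integrable (truncTraceU n p q) μ :=
  integrable_bdd μ (measurable_T p q) ((n:ℝ)^2) (fun U => by
    rw [abs_of_nonneg (T_nonneg p q U)]; exact T_le p q U)

lemma memℒ2_T (p q : ℕ) : MemLp (truncTraceU n p q) 2 μ := by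
  refine MemLp.mono_exponent ?_ (le_top : (2:ℝ≥0∞) ≤ ⊤)
  apply memLp_top_of_bound (measurable_T p q).aestronglyMeasurable ((n:ℝ)^2)
  exact Filter.Eventually.of_forall fun U => by
    rw [Real.norm_eq_abs, abs_of_nonneg (T_nonneg p q U)]; exact T_le p q U

lemma integral_T {p q : ℕ} (hp : p ≤ n) (hq : q ≤ n) :
    ∫ U, truncTraceU n p q U ∂μ = p * q / n := by
  have he : ∫ U, truncTraceU n p q U ∂μ = ∑ i ∈ fps n p, ∑ j ∈ fps n q, ∫ U, f i j U ∂μ := by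
    rw [integral_congr_ae (Filter.Eventually.of_forall (truncTrace_eq p q))]
    rw [integral_finset_sum _ (fun i _ => integrable_finset_sum _ (fun j _ => integrable_f μ i j))]
    exact Finset.sum_congr rfl fun i _ => integral_finset_sum _ (fun j _ => integrable_f μ i j)
  rw [he]
  have : ∀ i j : Fin n, ∫ U, f i j U ∂μ = 1/(n:ℝ) := fun i j => integral_f μ i j
  simp only [this, Finset.sum_const, nsmul_eq_mul, card_fps hp, card_fps hq]
  field_simp

lemma integral_T_sq (p q : ℕ) :
    ∫ U, (truncTraceU n p q U)^2 ∂μ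
      = ∑ i ∈ fps n p, ∑ k ∈ fps n p, ∑ j ∈ fps n q, ∑ l ∈ fps n q, F2 μ i j k l := by
  have hpt : ∀ U : UG n, (truncTraceU n p q U)^2
      = ∑ i ∈ fps n p, ∑ k ∈ fps n p, ∑ j ∈ fps n q, ∑ l ∈ fps n q, f i j U * f k l U := by
    intro U
    rw [truncTrace_eq, sq, Finset.sum_mul_sum]
    refine Finset.sum_congr rfl fun i _ => Finset.sum_congr rfl fun k _ => ?_
    rw [Finset.sum_mul_sum]
  have hint3 : ∀ i k : Fin n,
      Integrable (fun U => ∑ j ∈ fps n q, ∑ l ∈ fps n q, f i j U * f k l U) μ := fun i k =>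
    integrable_finset_sum _ (fun j _ => integrable_finset_sum _ (fun l _ => integrable_ff μ i j k l))
  rw [integral_congr_ae (Filter.Eventually.of_forall hpt)]
  rw [integral_finset_sum _ (fun i _ => integrable_finset_sum _ (fun k _ => hint3 i k))]
  refine Finset.sum_congr rfl fun i _ => ?_
  rw [integral_finset_sum _ (fun k _ => hint3 i k)]
  refine Finset.sum_congr rfl fun k _ => ?_
  rw [integral_finset_sum _ (fun j _ => integrable_finset_sum _ (fun l _ => integrable_ff μ i j k l))]
  refine Finset.sum_congr rfl fun j _ => ?_
  rw [integral_finset_sum _ (fun l _ => integrable_ff μ i j k l)]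
  rfl

lemma sum_le_const (s : Finset (Fin n)) (g : Fin n → ℝ) (c : ℝ)
    (h : ∀ x ∈ s, g x ≤ c) : ∑ x ∈ s, g x ≤ (s.card : ℝ) * c := by
  simpa [nsmul_eq_mul] using Finset.sum_le_card_nsmul s g c h

lemma S_bound (hn2 : 2 ≤ n) {p q : ℕ} (hp : p ≤ n) (hq : q ≤ n) :
    ∑ i ∈ fps n p, ∑ k ∈ fps n p, ∑ j ∈ fps n q, ∑ l ∈ fps n q, F2 μ i j k l
      ≤ (p:ℝ)*q/n + q + p + (p:ℝ)^2*q^2/((n:ℝ)*((n:ℝ)-1)) := by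
  have hn : 0 < n := by omega
  have hnR : (0:ℝ) < n := by exact_mod_cast hn
  have hn1R : (1:ℝ) ≤ (n:ℝ) - 1 := by
    have : (2:ℝ) ≤ (n:ℝ) := by exact_mod_cast hn2
    linarith
  have hcpos : (0:ℝ) ≤ 1/((n:ℝ)*((n:ℝ)-1)) := by positivity
  have hpR : ((fps n p).card : ℝ) = p := by rw [card_fps hp]
  have hqR : ((fps n q).card : ℝ) = q := by rw [card_fps hq]
  -- split l-sum at l = j
  have hsplit : ∀ i k : Fin n, (∑ j ∈ fps n q, ∑ l ∈ fps n q, F2 μ i j k l)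
      = (∑ j ∈ fps n q, F2 μ i j k j)
        + ∑ j ∈ fps n q, ∑ l ∈ (fps n q).erase j, F2 μ i j k l := by
    intro i k
    rw [← Finset.sum_add_distrib]
    exact Finset.sum_congr rfl fun j hj => (Finset.add_sum_erase _ _ hj).symm
  -- split k-sum at k = i
  have hsplit2 : ∀ (G : Fin n → Fin n → ℝ), (∑ i ∈ fps n p, ∑ k ∈ fps n p, G i k)
      = (∑ i ∈ fps n p, G i i) + ∑ i ∈ fps n p, ∑ k ∈ (fps n p).erase i, G i k := by
    intro G
    rw [← Finset.sum_add_distrib]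
    exact Finset.sum_congr rfl fun i hi => (Finset.add_sum_erase _ _ hi).symm
  have step1 : (∑ i ∈ fps n p, ∑ k ∈ fps n p, ∑ j ∈ fps n q, ∑ l ∈ fps n q, F2 μ i j k l)
      = ((∑ i ∈ fps n p, ∑ k ∈ fps n p, ∑ j ∈ fps n q, F2 μ i j k j)
        + ∑ i ∈ fps n p, ∑ k ∈ fps n p, ∑ j ∈ fps n q, ∑ l ∈ (fps n q).erase j, F2 μ i j k l) := by
    rw [← Finset.sum_add_distrib]
    refine Finset.sum_congr rfl fun i _ => ?_
    rw [← Finset.sum_add_distrib]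
    exact Finset.sum_congr rfl fun k _ => hsplit i k
  -- Sd1 bound
  have hSd1 : (∑ i ∈ fps n p, ∑ j ∈ fps n q, F2 μ i j i j) ≤ (p:ℝ)*q/n := by
    calc ∑ i ∈ fps n p, ∑ j ∈ fps n q, F2 μ i j i j
        ≤ ((fps n p).card : ℝ) * (((fps n q).card : ℝ) * (1/(n:ℝ))) := by
          refine sum_le_const _ _ _ fun i _ => ?_
          refine sum_le_const _ _ _ fun j _ => F2_diag_le μ i j
      _ = (p:ℝ)*q/n := by rw [hpR, hqR]; ring
  -- Sd2 bound
  have hSd2 : (∑ i ∈ fps n p, ∑ k ∈ (fps n p).erase i, ∑ j ∈ fps n q, F2 μ i j k j)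
      ≤ (q:ℝ) := by
    have hswap : (∑ i ∈ fps n p, ∑ k ∈ (fps n p).erase i, ∑ j ∈ fps n q, F2 μ i j k j)
        = ∑ j ∈ fps n q, ∑ i ∈ fps n p, ∑ k ∈ (fps n p).erase i, F2 μ i j k j := by
      calc ∑ i ∈ fps n p, ∑ k ∈ (fps n p).erase i, ∑ j ∈ fps n q, F2 μ i j k j
          = ∑ i ∈ fps n p, ∑ j ∈ fps n q, ∑ k ∈ (fps n p).erase i, F2 μ i j k j :=
            Finset.sum_congr rfl fun i _ => Finset.sum_comm
        _ = ∑ j ∈ fps n q, ∑ i ∈ fps n p, ∑ k ∈ (fps n p).erase i, F2 μ i j k j :=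
            Finset.sum_comm
    rw [hswap]
    calc ∑ j ∈ fps n q, ∑ i ∈ fps n p, ∑ k ∈ (fps n p).erase i, F2 μ i j k j
        ≤ ((fps n q).card : ℝ) * 1 := by
          refine sum_le_const _ _ _ fun j _ => ?_
          have hext : (∑ i ∈ fps n p, ∑ k ∈ (fps n p).erase i, F2 μ i j k j)
              ≤ ∑ i : Fin n, ∑ k ∈ Finset.univ.erase i, F2 μ i j k j := by
            refine le_trans (Finset.sum_le_sum fun i _ =>
              Finset.sum_le_sum_of_subset_of_nonneg
                (Finset.erase_subset_erase i (Finset.subset_univ _))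
                (fun k _ _ => F2_nonneg μ i j k j)) ?_
            exact Finset.sum_le_sum_of_subset_of_nonneg (Finset.subset_univ _)
              (fun i _ _ => Finset.sum_nonneg fun k _ => F2_nonneg μ i j k j)
          have hcb := colpair_bound μ j hn
          have h1n : (0:ℝ) ≤ 1/n := by positivity
          linarith
      _ = (q:ℝ) := by rw [hqR]; ring
  -- So1 bound
  have hSo1 : (∑ i ∈ fps n p, ∑ j ∈ fps n q, ∑ l ∈ (fps n q).erase j, F2 μ i j i l)
      ≤ (p:ℝ) := by
    calc ∑ i ∈ fps n p, ∑ j ∈ fps n q, ∑ l ∈ (fps n q).erase j, F2 μ i j i l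
        ≤ ((fps n p).card : ℝ) * 1 := by
          refine sum_le_const _ _ _ fun i _ => ?_
          have hext : (∑ j ∈ fps n q, ∑ l ∈ (fps n q).erase j, F2 μ i j i l)
              ≤ ∑ j : Fin n, ∑ l ∈ Finset.univ.erase j, F2 μ i j i l := by
            refine le_trans (Finset.sum_le_sum fun j _ =>
              Finset.sum_le_sum_of_subset_of_nonneg
                (Finset.erase_subset_erase j (Finset.subset_univ _))
                (fun l _ _ => F2_nonneg μ i j i l)) ?_
            exact Finset.sum_le_sum_of_subset_of_nonneg (Finset.subset_univ _)
              (fun j _ _ => Finset.sum_nonneg fun l _ => F2_nonneg μ i j i l)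
          have hrb := rowpair_bound μ i hn
          have h1n : (0:ℝ) ≤ 1/n := by positivity
          linarith
      _ = (p:ℝ) := by rw [hpR]; ring
  -- So2 bound
  have hSo2 : (∑ i ∈ fps n p, ∑ k ∈ (fps n p).erase i, ∑ j ∈ fps n q,
        ∑ l ∈ (fps n q).erase j, F2 μ i j k l)
      ≤ (p:ℝ)^2*q^2/((n:ℝ)*((n:ℝ)-1)) := by
    have hterm : ∀ i : Fin n, ∀ k ∈ (fps n p).erase i, ∀ j : Fin n, ∀ l ∈ (fps n q).erase j,
        F2 μ i j k l ≤ 1/((n:ℝ)*((n:ℝ)-1)) := by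
      intro i k hk j l hl
      exact F2_offdiag_le μ j l (Ne.symm (Finset.ne_of_mem_erase hk))
    have hcardp : ∀ i : Fin n, (((fps n p).erase i).card : ℝ) ≤ (p:ℝ) := by
      intro i
      have := Finset.card_le_card (Finset.erase_subset i (fps n p))
      rw [← hpR]
      exact_mod_cast this
    have hcardq : ∀ j : Fin n, (((fps n q).erase j).card : ℝ) ≤ (q:ℝ) := by
      intro j
      have := Finset.card_le_card (Finset.erase_subset j (fps n q))
      rw [← hqR]
      exact_mod_cast this
    have hqn : (0:ℝ) ≤ q := by positivity
    have hpn : (0:ℝ) ≤ p := by positivity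
    calc ∑ i ∈ fps n p, ∑ k ∈ (fps n p).erase i, ∑ j ∈ fps n q,
          ∑ l ∈ (fps n q).erase j, F2 μ i j k l
        ≤ ((fps n p).card : ℝ) * ((p:ℝ) * ((q:ℝ) * ((q:ℝ) * (1/((n:ℝ)*((n:ℝ)-1)))))) := by
          refine sum_le_const _ _ _ fun i _ => ?_
          calc ∑ k ∈ (fps n p).erase i, ∑ j ∈ fps n q, ∑ l ∈ (fps n q).erase j, F2 μ i j k l
              ≤ (((fps n p).erase i).card : ℝ)
                  * ((q:ℝ) * ((q:ℝ) * (1/((n:ℝ)*((n:ℝ)-1))))) := by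
                refine sum_le_const _ _ _ fun k hk => ?_
                calc ∑ j ∈ fps n q, ∑ l ∈ (fps n q).erase j, F2 μ i j k l
                    ≤ ((fps n q).card : ℝ) * ((q:ℝ) * (1/((n:ℝ)*((n:ℝ)-1)))) := by
                      refine sum_le_const _ _ _ fun j _ => ?_
                      calc ∑ l ∈ (fps n q).erase j, F2 μ i j k l
                          ≤ (((fps n q).erase j).card : ℝ) * (1/((n:ℝ)*((n:ℝ)-1))) :=
                            sum_le_const _ _ _ fun l hl => hterm i k hk j l hl
                        _ ≤ (q:ℝ) * (1/((n:ℝ)*((n:ℝ)-1))) :=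
                            mul_le_mul_of_nonneg_right (hcardq j) hcpos
                    _ = (q:ℝ) * ((q:ℝ) * (1/((n:ℝ)*((n:ℝ)-1)))) := by rw [hqR]
              _ ≤ (p:ℝ) * ((q:ℝ) * ((q:ℝ) * (1/((n:ℝ)*((n:ℝ)-1))))) := by
                refine mul_le_mul_of_nonneg_right (hcardp i) ?_
                positivity
      _ = (p:ℝ)^2*q^2/((n:ℝ)*((n:ℝ)-1)) := by rw [hpR]; ring
  rw [step1, hsplit2 (fun i k => ∑ j ∈ fps n q, F2 μ i j k j),
    hsplit2 (fun i k => ∑ j ∈ fps n q, ∑ l ∈ (fps n q).erase j, F2 μ i j k l)]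
  linarith

lemma variance_T_le (hn2 : 2 ≤ n) {p q : ℕ} (hp : p ≤ n) (hq : q ≤ n) :
    ProbabilityTheory.variance (truncTraceU n p q) μ ≤ 5*(n:ℝ) := by
  rw [ProbabilityTheory.variance_eq_sub (memℒ2_T μ p q)]
  have hTsq : (∫ U, ((truncTraceU n p q) ^ 2) U ∂μ) = ∫ U, (truncTraceU n p q U)^2 ∂μ := by
    exact integral_congr_ae (Filter.Eventually.of_forall fun U => by simp)
  have hT : (∫ U, truncTraceU n p q U ∂μ) = (p:ℝ)*q/n := integral_T μ hp hq
  rw [hTsq, hT, integral_T_sq]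
  have hS := S_bound μ hn2 hp hq
  -- real arithmetic
  have hNP : (p:ℝ) ≤ (n:ℝ) := by exact_mod_cast hp
  have hNQ : (q:ℝ) ≤ (n:ℝ) := by exact_mod_cast hq
  have hP0 : (0:ℝ) ≤ (p:ℝ) := by positivity
  have hQ0 : (0:ℝ) ≤ (q:ℝ) := by positivity
  have hN2 : (2:ℝ) ≤ (n:ℝ) := by exact_mod_cast hn2
  have hN0 : (0:ℝ) < (n:ℝ) := by linarith
  have hN1 : (0:ℝ) < (n:ℝ) - 1 := by linarith
  have h1 : (p:ℝ)*(q:ℝ)/(n:ℝ) ≤ (n:ℝ) := by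
    rw [div_le_iff₀ hN0]
    nlinarith
  have he : (p:ℝ)^2*(q:ℝ)^2/((n:ℝ)*((n:ℝ)-1)) - ((p:ℝ)*(q:ℝ)/(n:ℝ))^2
      = (p:ℝ)^2*(q:ℝ)^2 * (1/((n:ℝ)^2*((n:ℝ)-1))) := by
    field_simp
    ring
  have hfrac : (p:ℝ)^2*(q:ℝ)^2 * (1/((n:ℝ)^2*((n:ℝ)-1))) ≤ 2*(n:ℝ) := by
    have hbp : (p:ℝ)^2 ≤ (n:ℝ)^2 := by nlinarith
    have hbq : (q:ℝ)^2 ≤ (n:ℝ)^2 := by nlinarith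
    have hb : (p:ℝ)^2*(q:ℝ)^2 ≤ (n:ℝ)^2*(n:ℝ)^2 :=
      mul_le_mul hbp hbq (by positivity) (by positivity)
    have hpos : (0:ℝ) < (n:ℝ)^2*((n:ℝ)-1) := by positivity
    rw [mul_one_div, div_le_iff₀ hpos]
    nlinarith
  have h2 : (p:ℝ)^2*(q:ℝ)^2/((n:ℝ)*((n:ℝ)-1)) - ((p:ℝ)*(q:ℝ)/(n:ℝ))^2 ≤ 2*(n:ℝ) := by
    rw [he]; exact hfrac
  linarith

lemma cheb (hn2 : 2 ≤ n) {p q : ℕ} (hp : p ≤ n) (hq : q ≤ n) {c : ℝ} (hc : 0 < c) :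
    μ {U | c ≤ |truncTraceU n p q U - (p:ℝ)*q/n|} ≤ ENNReal.ofReal (5*(n:ℝ)/c^2) := by
  have h := ProbabilityTheory.meas_ge_le_variance_div_sq (μ := μ) (memℒ2_T μ p q) hc
  have hT : (∫ U, truncTraceU n p q U ∂μ) = (p:ℝ)*q/n := integral_T μ hp hq
  rw [hT] at h
  refine le_trans h (ENNReal.ofReal_le_ofReal ?_)
  exact (div_le_div_iff_of_pos_right (by positivity)).mpr (variance_T_le μ hn2 hp hq)

end Measure2

lemma grid_bracket {n m p : ℕ} (hm : 0 < m) (hn : 0 < n) (hp : p ≤ n) :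
    ∃ k1 k2 : ℕ, k1 ≤ m ∧ k2 ≤ m ∧ (k1*n/m) ≤ p ∧ p ≤ (k2*n/m) ∧ (k1*n/m) ≤ (k2*n/m) ∧
      ((k2*n/m : ℕ) : ℝ) ≤ ((k1*n/m : ℕ) : ℝ) + (n:ℝ)/m + 1 := by
  set k1 := p*m/n with hk1
  set k2 := min (k1+1) m with hk2
  have hk1m : k1 ≤ m := by
    rw [hk1]
    calc p*m/n ≤ n*m/n := Nat.div_le_div_right (Nat.mul_le_mul_right m hp)
      _ = m := Nat.mul_div_cancel_left m hn
  have hlow : k1*n/m ≤ p := by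
    have h1 : k1*n ≤ p*m := by
      rw [hk1]
      exact Nat.div_mul_le_self (p*m) n
    calc k1*n/m ≤ p*m/m := Nat.div_le_div_right h1
      _ = p := Nat.mul_div_cancel p hm
  have hhigh : p ≤ k2*n/m := by
    rcases lt_or_ge k1 m with h | h
    · have hk2e : k2 = k1 + 1 := by rw [hk2]; omega
      rw [hk2e]
      rw [Nat.le_div_iff_mul_le hm]
      have := Nat.div_add_mod (p*m) n
      have hmod := Nat.mod_lt (p*m) hn
      calc p*m = n*(p*m/n) + (p*m)%n := (Nat.div_add_mod (p*m) n).symm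
        _ ≤ n*k1 + (n-1) := by
            rw [hk1]
            omega
        _ ≤ (k1+1)*n := by
            have e : (k1+1)*n = n*k1 + n := by ring
            omega
    · have hk2e : k2 = m := by rw [hk2]; omega
      rw [hk2e, Nat.mul_div_cancel_left n hm]
      exact hp
  have hmono : k1*n/m ≤ k2*n/m := le_trans hlow hhigh
  have hgap : ((k2*n/m : ℕ) : ℝ) ≤ ((k1*n/m : ℕ) : ℝ) + (n:ℝ)/m + 1 := by
    have h1 : k2*n/m ≤ (k1+1)*n/m :=
      Nat.div_le_div_right (Nat.mul_le_mul_right n (min_le_left _ _))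
    have h2 : (((k1+1)*n/m : ℕ) : ℝ) ≤ (((k1+1)*n : ℕ) : ℝ)/(m:ℝ) := Nat.cast_div_le
    have h3 : ((k1*n : ℕ) : ℝ)/(m:ℝ) ≤ ((k1*n/m : ℕ) : ℝ) + 1 := by
      have hd := Nat.div_add_mod (k1*n) m
      have hmod := Nat.mod_lt (k1*n) hm
      have hlt : (k1*n : ℕ) < (k1*n/m + 1) * m := by
        have e : (k1*n/m + 1)*m = m*(k1*n/m) + m := by ring
        omega
      have hltR : ((k1*n : ℕ) : ℝ) < ((k1*n/m : ℕ) + 1 : ℕ) * (m:ℝ) := by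
        exact_mod_cast hlt
      have hmR : (0:ℝ) < m := by exact_mod_cast hm
      rw [div_le_iff₀ hmR]
      push_cast at hltR ⊢
      linarith
    have h4 : (((k1+1)*n : ℕ) : ℝ)/(m:ℝ) = ((k1*n : ℕ) : ℝ)/(m:ℝ) + (n:ℝ)/m := by
      push_cast
      ring
    have h1R : ((k2*n/m : ℕ) : ℝ) ≤ (((k1+1)*n/m : ℕ) : ℝ) := by exact_mod_cast h1
    calc ((k2*n/m : ℕ) : ℝ) ≤ (((k1+1)*n/m : ℕ) : ℝ) := h1R
      _ ≤ (((k1+1)*n : ℕ) : ℝ)/(m:ℝ) := h2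
      _ = ((k1*n : ℕ) : ℝ)/(m:ℝ) + (n:ℝ)/m := h4
      _ ≤ ((k1*n/m : ℕ) : ℝ) + 1 + (n:ℝ)/m := by linarith
      _ = ((k1*n/m : ℕ) : ℝ) + (n:ℝ)/m + 1 := by ring
  exact ⟨k1, k2, hk1m, le_trans (min_le_right _ _) (le_refl m), hlow, hhigh, hmono, hgap⟩

lemma gridpt_le {n m k : ℕ} (hm : 0 < m) (hk : k ≤ m) : k*n/m ≤ n := by
  calc k*n/m ≤ m*n/m := Nat.div_le_div_right (Nat.mul_le_mul_right n hk)
    _ = n := Nat.mul_div_cancel_left n hm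

lemma sandwich {n m : ℕ} (hn2 : 2 ≤ n) (hm : 0 < m) {ε : ℝ} (hε : 0 < ε)
    (hmε : 8 ≤ ε * m) (hnε : 8 ≤ ε * n) (U : UG n)
    (H : ∀ k ≤ m, ∀ l ≤ m,
      |(1/(n:ℝ)) * truncTraceU n (k*n/m) (l*n/m) U
        - ((k*n/m : ℕ):ℝ)*((l*n/m : ℕ):ℝ)/(n:ℝ)^2| ≤ ε/2)
    {p q : ℕ} (hp : p ≤ n) (hq : q ≤ n) :
    |(1/(n:ℝ)) * truncTraceU n p q U - (p:ℝ)*(q:ℝ)/(n:ℝ)^2| ≤ ε := by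
  have hn : 0 < n := by omega
  obtain ⟨k1, k2, hk1m, hk2m, hplow, hphigh, hpmono, hpgap⟩ := grid_bracket hm hn hp
  obtain ⟨l1, l2, hl1m, hl2m, hqlow, hqhigh, hqmono, hqgap⟩ := grid_bracket hm hn hq
  set a1 := k1*n/m
  set a2 := k2*n/m
  set b1 := l1*n/m
  set b2 := l2*n/m
  have H1 := H k1 hk1m l1 hl1m
  have H2 := H k2 hk2m l2 hl2m
  have hnR : (0:ℝ) < n := by exact_mod_cast hn
  have hmR : (0:ℝ) < m := by exact_mod_cast hm
  have hinv : (0:ℝ) ≤ 1/(n:ℝ) := by positivity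
  -- monotonicity
  have hx1 : (1/(n:ℝ)) * truncTraceU n a1 b1 U ≤ (1/(n:ℝ)) * truncTraceU n p q U :=
    mul_le_mul_of_nonneg_left (T_mono hplow hqlow U) hinv
  have hx2 : (1/(n:ℝ)) * truncTraceU n p q U ≤ (1/(n:ℝ)) * truncTraceU n a2 b2 U :=
    mul_le_mul_of_nonneg_left (T_mono hphigh hqhigh U) hinv
  -- real bounds on grid points
  have ha2n : (a2:ℝ) ≤ n := by exact_mod_cast gridpt_le hm hk2m
  have hb2n : (b2:ℝ) ≤ n := by exact_mod_cast gridpt_le hm hl2m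
  have hb1n : (b1:ℝ) ≤ n := by exact_mod_cast gridpt_le hm hl1m
  have ha1p : (a1:ℝ) ≤ p := by exact_mod_cast hplow
  have hpa2 : (p:ℝ) ≤ a2 := by exact_mod_cast hphigh
  have hb1q : (b1:ℝ) ≤ q := by exact_mod_cast hqlow
  have hqb2 : (q:ℝ) ≤ b2 := by exact_mod_cast hqhigh
  have ha12 : (a1:ℝ) ≤ a2 := by exact_mod_cast hpmono
  have hb12 : (b1:ℝ) ≤ b2 := by exact_mod_cast hqmono
  have ha1nn : (0:ℝ) ≤ a1 := by positivity
  have hb1nn : (0:ℝ) ≤ b1 := by positivity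
  have ha2nn : (0:ℝ) ≤ a2 := by positivity
  -- gap
  set G := (n:ℝ)/m + 1 with hG
  have hGpos : 0 ≤ G := by positivity
  have hgapa : (a2:ℝ) - a1 ≤ G := by rw [hG]; linarith [hpgap]
  have hgapb : (b2:ℝ) - b1 ≤ G := by rw [hG]; linarith [hqgap]
  -- product bounds
  have hprod1 : (a1:ℝ)*b1 ≤ (p:ℝ)*q :=
    mul_le_mul ha1p hb1q hb1nn (by positivity)
  have hprod2 : (p:ℝ)*q ≤ (a2:ℝ)*b2 :=
    mul_le_mul hpa2 hqb2 (by positivity) ha2nn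
  have hproddiff : (a2:ℝ)*b2 - (a1:ℝ)*b1 ≤ 2*(n:ℝ)*G := by
    have e : (a2:ℝ)*b2 - (a1:ℝ)*b1 = (a2:ℝ)*((b2:ℝ)-b1) + (b1:ℝ)*((a2:ℝ)-a1) := by ring
    have t1 : (a2:ℝ)*((b2:ℝ)-b1) ≤ (n:ℝ)*G :=
      mul_le_mul ha2n hgapb (by linarith) (by linarith)
    have t2 : (b1:ℝ)*((a2:ℝ)-a1) ≤ (n:ℝ)*G :=
      mul_le_mul hb1n hgapa (by linarith) (by linarith)
    rw [e]; linarith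
  -- divided gap bound
  have hdiv : ((a2:ℝ)*b2 - (a1:ℝ)*b1)/(n:ℝ)^2 ≤ ε/2 := by
    have heq : (2*(n:ℝ)*G)/(n:ℝ)^2 = 2/(m:ℝ) + 2/(n:ℝ) := by
      rw [hG]
      field_simp
    have hm4 : 2/(m:ℝ) ≤ ε/4 := by
      rw [div_le_div_iff₀ hmR (by norm_num : (0:ℝ) < 4)]
      linarith
    have hn4 : 2/(n:ℝ) ≤ ε/4 := by
      rw [div_le_div_iff₀ hnR (by norm_num : (0:ℝ) < 4)]
      linarith
    have h1 : ((a2:ℝ)*b2 - (a1:ℝ)*b1)/(n:ℝ)^2 ≤ (2*(n:ℝ)*G)/(n:ℝ)^2 := by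
      gcongr
    rw [heq] at h1
    linarith
  -- y-bounds
  have hn2pos : (0:ℝ) < (n:ℝ)^2 := by positivity
  have hy1 : (a1:ℝ)*b1/(n:ℝ)^2 ≤ (p:ℝ)*q/(n:ℝ)^2 := by gcongr
  have hy2 : (p:ℝ)*q/(n:ℝ)^2 ≤ (a2:ℝ)*b2/(n:ℝ)^2 := by gcongr
  have hdiff : (a2:ℝ)*b2/(n:ℝ)^2 - (a1:ℝ)*b1/(n:ℝ)^2 ≤ ε/2 := by
    rw [← sub_div]
    exact hdiv
  obtain ⟨H1l, H1r⟩ := abs_le.mp H1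
  obtain ⟨H2l, H2r⟩ := abs_le.mp H2
  apply abs_le.mpr
  constructor
  · linarith
  · linarith

end TTU

open TTU in
/-- If `U⁽ⁿ⁾` is Haar distributed on `U(n)`, then
`max_{0 ≤ p, q ≤ n} |(1/n) T_{p,q} - pq/n²| → 0` in probability: for every `ε > 0`, the Haar
probability that some `p, q ≤ n` satisfy `|(1/n) T_{p,q} - pq/n²| > ε` tends to `0`. -/
theorem truncTraceU_uniform_law_of_large_numbers
    (μ : ∀ n : ℕ, Measure (Matrix.unitaryGroup (Fin n) ℂ))
    (hHaar : ∀ n, (μ n).IsHaarMeasure) (hProb : ∀ n, IsProbabilityMeasure (μ n)) :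
    ∀ ε : ℝ, 0 < ε →
      Tendsto (fun n : ℕ =>
          μ n {U | ∃ p ≤ n, ∃ q ≤ n,
            ε < |(1 / (n : ℝ)) * truncTraceU n p q U - (p : ℝ) * q / (n : ℝ) ^ 2|})
        atTop (nhds 0) := by
  intro ε hε
  set m : ℕ := max 1 ⌈(8:ℝ)/ε⌉₊ with hmdef
  have hm0 : 0 < m := lt_of_lt_of_le one_pos (le_max_left 1 _)
  have hceil : (8:ℝ)/ε ≤ (⌈(8:ℝ)/ε⌉₊ : ℝ) := Nat.le_ceil _
  have hmε : 8 ≤ ε * m := by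
    have h1 : ((⌈(8:ℝ)/ε⌉₊ : ℕ) : ℝ) ≤ (m:ℝ) := by
      exact_mod_cast le_max_right 1 ⌈(8:ℝ)/ε⌉₊
    have h2 : (8:ℝ)/ε ≤ (m:ℝ) := le_trans hceil h1
    rw [div_le_iff₀ hε] at h2
    linarith
  set C : ℝ≥0∞ := ((m+1:ℕ):ℝ≥0∞)^2 with hCdef
  have hCne : C ≠ ⊤ := by
    rw [hCdef]
    exact ENNReal.pow_ne_top (ENNReal.natCast_ne_top _)
  set B : ℕ → ℝ≥0∞ := fun n => C * ENNReal.ofReal (5*(n:ℝ)/((n:ℝ)*(ε/2))^2) with hBdef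
  have hBlim : Tendsto B atTop (nhds 0) := by
    have h1 : Tendsto (fun n : ℕ => (20/ε^2)/(n:ℝ)) atTop (nhds 0) :=
      tendsto_const_div_atTop_nhds_zero_nat _
    have h2 : (fun n : ℕ => 5*(n:ℝ)/((n:ℝ)*(ε/2))^2) =ᶠ[atTop] (fun n : ℕ => (20/ε^2)/(n:ℝ)) := by
      filter_upwards [eventually_ge_atTop 1] with n hn
      have hnR : (0:ℝ) < n := by exact_mod_cast hn
      field_simp
      ring
    have h3 : Tendsto (fun n : ℕ => 5*(n:ℝ)/((n:ℝ)*(ε/2))^2) atTop (nhds 0) :=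
      h1.congr' h2.symm
    have h4 : Tendsto (fun n : ℕ => ENNReal.ofReal (5*(n:ℝ)/((n:ℝ)*(ε/2))^2)) atTop (nhds 0) := by
      have := ENNReal.tendsto_ofReal (a := 0) h3
      simpa using this
    have h5 := ENNReal.Tendsto.const_mul (a := C) h4 (Or.inr hCne)
    simpa using h5
  have hbound : ∀ᶠ n in atTop, μ n {U | ∃ p ≤ n, ∃ q ≤ n,
      ε < |(1 / (n : ℝ)) * truncTraceU n p q U - (p : ℝ) * q / (n : ℝ) ^ 2|} ≤ B n := by
    filter_upwards [eventually_ge_atTop (max 2 ⌈(8:ℝ)/ε⌉₊)] with n hn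
    have hn2 : 2 ≤ n := le_trans (le_max_left _ _) hn
    have hnR : (0:ℝ) < n := by
      have : (0:ℕ) < n := by omega
      exact_mod_cast this
    have hnε : 8 ≤ ε * n := by
      have h1 : ((⌈(8:ℝ)/ε⌉₊ : ℕ) : ℝ) ≤ (n:ℝ) := by
        exact_mod_cast le_trans (le_max_right 2 _) hn
      have h2 : (8:ℝ)/ε ≤ (n:ℝ) := le_trans hceil h1
      rw [div_le_iff₀ hε] at h2
      linarith
    haveI := hProb n
    haveI := (hHaar n).toIsMulLeftInvariant
    set Bad : ℕ → ℕ → Set (UG n) := fun k l =>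
      {U : UG n | ε/2 < |(1/(n:ℝ)) * truncTraceU n (k*n/m) (l*n/m) U
        - ((k*n/m : ℕ):ℝ)*((l*n/m : ℕ):ℝ)/(n:ℝ)^2|} with hBadDef
    have hsub : {U : UG n | ∃ p ≤ n, ∃ q ≤ n,
        ε < |(1 / (n : ℝ)) * truncTraceU n p q U - (p : ℝ) * q / (n : ℝ) ^ 2|}
        ⊆ ⋃ k ∈ Finset.range (m+1), ⋃ l ∈ Finset.range (m+1), Bad k l := by
      intro U hU
      obtain ⟨p, hp, q, hq, hgt⟩ := hU
      by_contra hU'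
      simp only [Set.mem_iUnion, Finset.mem_range, not_exists, hBadDef,
        Set.mem_setOf_eq, not_lt] at hU'
      have H : ∀ k ≤ m, ∀ l ≤ m,
          |(1/(n:ℝ)) * truncTraceU n (k*n/m) (l*n/m) U
            - ((k*n/m : ℕ):ℝ)*((l*n/m : ℕ):ℝ)/(n:ℝ)^2| ≤ ε/2 := by
        intro k hk l hl
        exact hU' k (by omega) l (by omega)
      have := sandwich hn2 hm0 hε hmε hnε U H hp hq
      exact absurd hgt (not_lt.mpr this)
    have hcpos : (0:ℝ) < (n:ℝ)*(ε/2) := by positivity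
    have hBadLe : ∀ k ∈ Finset.range (m+1), ∀ l ∈ Finset.range (m+1),
        μ n (Bad k l) ≤ ENNReal.ofReal (5*(n:ℝ)/((n:ℝ)*(ε/2))^2) := by
      intro k hk l hl
      have hkm : k ≤ m := by simp at hk; omega
      have hlm : l ≤ m := by simp at hl; omega
      have hsub2 : Bad k l ⊆ {U : UG n | (n:ℝ)*(ε/2)
          ≤ |truncTraceU n (k*n/m) (l*n/m) U - ((k*n/m : ℕ):ℝ)*((l*n/m : ℕ):ℝ)/(n:ℝ)|} := by
        intro U hU
        simp only [hBadDef, Set.mem_setOf_eq] at hU ⊢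
        have heq : (1/(n:ℝ)) * truncTraceU n (k*n/m) (l*n/m) U
            - ((k*n/m : ℕ):ℝ)*((l*n/m : ℕ):ℝ)/(n:ℝ)^2
            = (truncTraceU n (k*n/m) (l*n/m) U
                - ((k*n/m : ℕ):ℝ)*((l*n/m : ℕ):ℝ)/(n:ℝ))/(n:ℝ) := by
          field_simp
        rw [heq, abs_div, abs_of_pos hnR] at hU
        rw [lt_div_iff₀ hnR] at hU
        calc (n:ℝ)*(ε/2) = ε/2*(n:ℝ) := by ring
          _ ≤ |_| := le_of_lt hU
      calc μ n (Bad k l) ≤ μ n {U : UG n | (n:ℝ)*(ε/2)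
            ≤ |truncTraceU n (k*n/m) (l*n/m) U - ((k*n/m : ℕ):ℝ)*((l*n/m : ℕ):ℝ)/(n:ℝ)|} :=
            measure_mono hsub2
        _ ≤ ENNReal.ofReal (5*(n:ℝ)/((n:ℝ)*(ε/2))^2) :=
            cheb (μ n) hn2 (gridpt_le hm0 hkm) (gridpt_le hm0 hlm) hcpos
    calc μ n {U : UG n | ∃ p ≤ n, ∃ q ≤ n,
          ε < |(1 / (n : ℝ)) * truncTraceU n p q U - (p : ℝ) * q / (n : ℝ) ^ 2|}
        ≤ μ n (⋃ k ∈ Finset.range (m+1), ⋃ l ∈ Finset.range (m+1), Bad k l) :=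
          measure_mono hsub
      _ ≤ ∑ k ∈ Finset.range (m+1), μ n (⋃ l ∈ Finset.range (m+1), Bad k l) :=
          measure_biUnion_finset_le _ _
      _ ≤ ∑ k ∈ Finset.range (m+1), ∑ l ∈ Finset.range (m+1), μ n (Bad k l) :=
          Finset.sum_le_sum fun k _ => measure_biUnion_finset_le _ _
      _ ≤ ∑ k ∈ Finset.range (m+1), ∑ l ∈ Finset.range (m+1),
            ENNReal.ofReal (5*(n:ℝ)/((n:ℝ)*(ε/2))^2) :=
          Finset.sum_le_sum fun k hk => Finset.sum_le_sum fun l hl => hBadLe k hk l hl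
      _ = B n := by
          rw [Finset.sum_const, Finset.sum_const, Finset.card_range, nsmul_eq_mul,
            nsmul_eq_mul, hBdef, hCdef]
          push_cast
          ring
  exact tendsto_of_tendsto_of_tendsto_of_le_of_le' tendsto_const_nhds hBlim
    (Filter.Eventually.of_forall fun n => zero_le) hbound
end

section
/- Let S be a finite set of cardinality k and let A and B be partitions of S. Suppose there exist a block A_i of A and a block B_j of B such that the intersection A_i ∩ B_j has cardinality l. Then #(A) + #(B) ≤ k − l + 1 + #(A∨B), where #(·) denotes the number of blocks of a partition and A∨B is the join in the lattice of partitions of S. -/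
open Function

section Graph

variable {V : Type*}

/-- Adjoin the pair `(x, y)` to the setoid `s`. -/
private def addPair (s : Setoid V) (x y : V) : Setoid V where
  r u v := s u v ∨ (s u x ∧ s y v) ∨ (s u y ∧ s x v)
  iseqv := by
    constructor
    · intro u; exact Or.inl (s.refl u)
    · rintro u v (h | ⟨h1, h2⟩ | ⟨h1, h2⟩)
      exacts [Or.inl (s.symm h), Or.inr (Or.inr ⟨s.symm h2, s.symm h1⟩),
        Or.inr (Or.inl ⟨s.symm h2, s.symm h1⟩)]
    · rintro u v w (h | ⟨h1, h2⟩ | ⟨h1, h2⟩) (h' | ⟨h1', h2'⟩ | ⟨h1', h2'⟩)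
      · exact Or.inl (s.trans' h h')
      · exact Or.inr (Or.inl ⟨s.trans' h h1', h2'⟩)
      · exact Or.inr (Or.inr ⟨s.trans' h h1', h2'⟩)
      · exact Or.inr (Or.inl ⟨h1, s.trans' h2 h'⟩)
      · exact Or.inr (Or.inl ⟨h1, h2'⟩)
      · exact Or.inl (s.trans' h1 h2')
      · exact Or.inr (Or.inr ⟨h1, s.trans' h2 h'⟩)
      · exact Or.inl (s.trans' h1 h2')
      · exact Or.inr (Or.inr ⟨h1, h2'⟩)

private lemma addPair_rel (s : Setoid V) (x y : V) (u v : V) :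
    addPair s x y u v ↔ s u v ∨ (s u x ∧ s y v) ∨ (s u y ∧ s x v) := Iff.rfl

/-- Merging one extra pair decreases the number of classes by at most one. -/
private lemma card_quot_le_card_quot_addPair [Finite V] (s : Setoid V) (x y : V) :
    Nat.card (Quotient s) ≤ Nat.card (Quotient (addPair s x y)) + 1 := by
  classical
  set t := addPair s x y with ht
  have hle : ∀ a b : V, s a b → t a b := fun a b h => Or.inl h
  let f : Quotient s → (Quotient t) ⊕ Unit := fun c =>
    if c = Quotient.mk s y then Sum.inr () else Sum.inl (Quotient.map' id hle c)
  have hf : Injective f := by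
    intro c d hcd
    by_cases hc : c = Quotient.mk s y <;> by_cases hd : d = Quotient.mk s y
    · rw [hc, hd]
    · simp only [f, if_pos hc, if_neg hd] at hcd; exact absurd hcd.symm (by simp)
    · simp only [f, if_neg hc, if_pos hd] at hcd; exact absurd hcd (by simp)
    · simp only [f, if_neg hc, if_neg hd] at hcd
      induction c using Quotient.ind with | _ u =>
      induction d using Quotient.ind with | _ v =>
      simp only [Quotient.map'_mk''] at hcd
      have : t u v := by
        have := Sum.inl.inj hcd
        exact Quotient.exact this
      rcases this with h | ⟨h1, h2⟩ | ⟨h1, h2⟩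
      · exact Quotient.sound h
      · exact absurd (Quotient.sound (s.symm h2)) hd
      · exact absurd (Quotient.sound h1) hc
  calc Nat.card (Quotient s) ≤ Nat.card ((Quotient t) ⊕ Unit) :=
        Nat.card_le_card_of_injective f hf
    _ = Nat.card (Quotient t) + 1 := by rw [Nat.card_sum]; simp

private def genF (F : Finset (V × V)) : Setoid V :=
  Relation.EqvGen.setoid (fun u v => (u, v) ∈ F)

private lemma card_le_card_edges_add [Finite V] (F : Finset (V × V)) :
    Nat.card V ≤ F.card + Nat.card (Quotient (genF F)) := by
  classical
  induction F using Finset.induction_on with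
  | empty =>
    have hbot : ∀ u v : V, genF (∅ : Finset (V × V)) u v → u = v := by
      intro u v h
      induction h with
      | rel _ _ h => simp at h
      | refl => rfl
      | symm _ _ _ ih => exact ih.symm
      | trans _ _ _ _ _ ih1 ih2 => exact ih1.trans ih2
    have hinj : Injective (Quotient.mk (genF (∅ : Finset (V × V)))) :=
      fun u v h => hbot u v (Quotient.exact h)
    simpa using Nat.card_le_card_of_injective _ hinj
  | @insert e F he ih =>
    obtain ⟨x, y⟩ := e
    have key : genF (insert (x, y) F) = addPair (genF F) x y := by
      apply le_antisymm
      · apply Setoid.eqvGen_le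
        intro u v huv
        rcases Finset.mem_insert.mp huv with h | h
        · rw [Prod.mk.injEq] at h
          obtain ⟨rfl, rfl⟩ := h
          exact Or.inr (Or.inl ⟨(genF F).refl _, (genF F).refl _⟩)
        · exact Or.inl (Relation.EqvGen.rel _ _ h)
      · intro u v huv
        have hmono : ∀ a b : V, genF F a b → genF (insert (x, y) F) a b := by
          intro a b h
          induction h with
          | rel _ _ h => exact Relation.EqvGen.rel _ _ (Finset.mem_insert_of_mem h)
          | refl => exact Relation.EqvGen.refl _
          | symm _ _ _ ih => exact Relation.EqvGen.symm _ _ ih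
          | trans _ _ _ _ _ ih1 ih2 => exact Relation.EqvGen.trans _ _ _ ih1 ih2
        have hxy : genF (insert (x, y) F) x y :=
          Relation.EqvGen.rel _ _ (Finset.mem_insert_self _ _)
        rcases huv with h | ⟨h1, h2⟩ | ⟨h1, h2⟩
        · exact hmono _ _ h
        · exact (genF _).trans' (hmono _ _ h1) ((genF _).trans' hxy (hmono _ _ h2))
        · exact (genF _).trans' (hmono _ _ h1)
            ((genF _).trans' ((genF _).symm hxy) (hmono _ _ h2))
    calc Nat.card V ≤ F.card + Nat.card (Quotient (genF F)) := ih
      _ ≤ F.card + (Nat.card (Quotient (addPair (genF F) x y)) + 1) := by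
          exact Nat.add_le_add_left (card_quot_le_card_quot_addPair _ _ _) _
      _ = (insert (x, y) F).card + Nat.card (Quotient (genF (insert (x, y) F))) := by
          rw [key, Finset.card_insert_of_notMem he]; ring

end Graph

/-- Supermodularity of the number of blocks. -/
private lemma supermod {S : Type*} [Fintype S] (A B : Setoid S) :
    Nat.card (Quotient A) + Nat.card (Quotient B) ≤
      Nat.card (Quotient (A ⊓ B)) + Nat.card (Quotient (A ⊔ B)) := by
  classical
  set V := Quotient A ⊕ Quotient B with hV
  let e : S → V × V := fun x => (Sum.inl (Quotient.mk A x), Sum.inr (Quotient.mk B x))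
  let F : Finset (V × V) := Finset.univ.image e
  -- well-definedness of e on the meet quotient
  have he_resp : ∀ x y : S, (A ⊓ B) x y → e x = e y := by
    intro x y h
    obtain ⟨hA, hB⟩ : A x y ∧ B x y := h
    simp only [e, Prod.mk.injEq]
    exact ⟨congrArg _ (Quotient.sound hA), congrArg _ (Quotient.sound hB)⟩
  let ebar : Quotient (A ⊓ B) → V × V := Quotient.lift e he_resp
  -- F has at most #(A ⊓ B) elements
  have hFcard : F.card ≤ Nat.card (Quotient (A ⊓ B)) := by
    have : F = Finset.univ.image (fun m : Quotient (A ⊓ B) => ebar m) := by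
      ext p
      simp only [F, Finset.mem_image, Finset.mem_univ, true_and]
      constructor
      · rintro ⟨x, rfl⟩; exact ⟨Quotient.mk _ x, rfl⟩
      · rintro ⟨m, rfl⟩
        induction m using Quotient.ind with | _ x => exact ⟨x, rfl⟩
    rw [this, Nat.card_eq_fintype_card]
    exact (Finset.card_image_le).trans (by simp)
  -- the edge relation
  have hedge : ∀ x : S, genF F (Sum.inl (Quotient.mk A x)) (Sum.inr (Quotient.mk B x)) := by
    intro x
    exact Relation.EqvGen.rel _ _ (Finset.mem_image.mpr ⟨x, Finset.mem_univ x, rfl⟩)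
  -- connected components of graph = join classes
  have hkey : ∀ x y : S, (A ⊔ B) x y →
      genF F (Sum.inl (Quotient.mk A x)) (Sum.inl (Quotient.mk A y)) := by
    intro x y h
    rw [Setoid.sup_eq_eqvGen] at h
    change Relation.EqvGen.setoid _ x y at h
    induction h with
    | rel u v h =>
      rcases h with h | h
      · exact (Quotient.sound h : Quotient.mk A u = Quotient.mk A v) ▸ (genF F).refl _
      · exact (genF F).trans' (hedge u)
          ((Quotient.sound h : Quotient.mk B u = Quotient.mk B v) ▸ (genF F).symm (hedge v))
    | refl => exact (genF F).refl _
    | symm _ _ _ ih => exact (genF F).symm ih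
    | trans _ _ _ _ _ ih1 ih2 => exact (genF F).trans' ih1 ih2
  -- the map from graph components to join classes
  have hAle : A ≤ A ⊔ B := le_sup_left
  have hBle : B ≤ A ⊔ B := le_sup_right
  let h : V → Quotient (A ⊔ B) :=
    Sum.elim (Quotient.map' id (fun a b hab => hAle hab)) (Quotient.map' id (fun a b hab => hBle hab))
  have hconst : ∀ u v : V, genF F u v → h u = h v := by
    intro u v huv
    induction huv with
    | rel u v h' =>
      obtain ⟨x, -, hx⟩ := Finset.mem_image.mp h'
      have h1 : u = Sum.inl (Quotient.mk A x) := (congrArg Prod.fst hx).symm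
      have h2 : v = Sum.inr (Quotient.mk B x) := (congrArg Prod.snd hx).symm
      rw [h1, h2]; rfl
    | refl => rfl
    | symm _ _ _ ih => exact ih.symm
    | trans _ _ _ _ _ ih1 ih2 => exact ih1.trans ih2
  let hbar : Quotient (genF F) → Quotient (A ⊔ B) :=
    Quotient.lift h (fun u v huv => hconst u v (Quotient.exact (Quotient.sound huv)))
  have hbar_inj : Injective hbar := by
    intro c d hcd
    induction c using Quotient.ind with | _ u =>
    induction d using Quotient.ind with | _ v =>
    apply Quotient.sound
    have huv : h u = h v := hcd
    match u, v with
    | Sum.inl qa, Sum.inl qb =>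
      induction qa using Quotient.ind with | _ x =>
      induction qb using Quotient.ind with | _ y =>
      exact hkey x y (Quotient.exact huv)
    | Sum.inl qa, Sum.inr qb =>
      induction qa using Quotient.ind with | _ x =>
      induction qb using Quotient.ind with | _ y =>
      exact (genF F).trans' (hkey x y (Quotient.exact huv)) (hedge y)
    | Sum.inr qa, Sum.inl qb =>
      induction qa using Quotient.ind with | _ x =>
      induction qb using Quotient.ind with | _ y =>
      exact (genF F).trans' ((genF F).symm (hedge x)) (hkey x y (Quotient.exact huv))
    | Sum.inr qa, Sum.inr qb =>
      induction qa using Quotient.ind with | _ x =>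
      induction qb using Quotient.ind with | _ y =>
      exact (genF F).trans' ((genF F).symm (hedge x))
        ((genF F).trans' (hkey x y (Quotient.exact huv)) (hedge y))
  have hcomps : Nat.card (Quotient (genF F)) ≤ Nat.card (Quotient (A ⊔ B)) :=
    Nat.card_le_card_of_injective hbar hbar_inj
  calc Nat.card (Quotient A) + Nat.card (Quotient B) = Nat.card V := (Nat.card_sum).symm
    _ ≤ F.card + Nat.card (Quotient (genF F)) := card_le_card_edges_add F
    _ ≤ Nat.card (Quotient (A ⊓ B)) + Nat.card (Quotient (A ⊔ B)) :=
        Nat.add_le_add hFcard hcomps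

/-- Let `A` and `B` be partitions (encoded as setoids, i.e. equivalence
relations, whose blocks are the equivalence classes) of a finite set `S` of cardinality `k`.
If some block of `A` (the class of a point `a`) and some block of `B` (the class of a point
`b`) intersect in a set of cardinality `l`, then `#(A) + #(B) ≤ k - l + 1 + #(A ⊔ B)`,
where `#(·)` is the number of blocks and `A ⊔ B` is the join in the lattice of partitions. -/
theorem card_blocks_add_card_blocks_le_of_inter_block
    (S : Type*) [Fintype S] (A B : Setoid S) (a b : S) (l : ℕ)
    (hl : Nat.card ({x | A x a} ∩ {x | B x b} : Set S) = l) :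
    Nat.card (Quotient A) + Nat.card (Quotient B) ≤
      Fintype.card S - l + 1 + Nat.card (Quotient (A ⊔ B)) := by
  classical
  set T : Set S := {x | A x a} ∩ {x | B x b} with hT
  have hln : l ≤ Fintype.card S := by
    rw [← hl]
    simpa using Nat.card_le_card_of_injective (fun x : T => (x : S)) Subtype.val_injective
  have hmeet : Nat.card (Quotient (A ⊓ B)) + l ≤ Fintype.card S + 1 := by
    rcases Set.eq_empty_or_nonempty T with hTe | ⟨c, hc⟩
    · have hl0 : l = 0 := by rw [← hl, hTe]; simp
      have : Nat.card (Quotient (A ⊓ B)) ≤ Fintype.card S := by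
        have := Nat.card_le_card_of_surjective (Quotient.mk (A ⊓ B)) Quotient.mk_surjective
        simpa using this
      omega
    · obtain ⟨hca, hcb⟩ := hc
      -- classes other than that of c inject into Tᶜ
      let φ : {q : Quotient (A ⊓ B) // q ≠ Quotient.mk (A ⊓ B) c} → (Tᶜ : Set S) := fun q =>
        ⟨q.val.out, by
          intro hmem
          obtain ⟨ha', hb'⟩ := hmem
          apply q.prop
          have hrel : (A ⊓ B) q.val.out c :=
            ⟨A.trans' ha' (A.symm hca), B.trans' hb' (B.symm hcb)⟩
          rw [← Quotient.out_eq q.val]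
          exact Quotient.sound hrel⟩
      have hφ : Injective φ := by
        intro q q' hqq
        have : q.val.out = q'.val.out := congrArg Subtype.val hqq
        ext
        rw [← Quotient.out_eq q.val, ← Quotient.out_eq q'.val, this]
      have h1 : Nat.card {q : Quotient (A ⊓ B) // q ≠ Quotient.mk (A ⊓ B) c} ≤
          Nat.card (Tᶜ : Set S) := Nat.card_le_card_of_injective φ hφ
      have h2 : Nat.card (Tᶜ : Set S) + l = Fintype.card S := by
        have h' := Set.ncard_add_ncard_compl T
        rw [← Nat.card_coe_set_eq, ← Nat.card_coe_set_eq, hl] at h'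
        have hn : Nat.card S = Fintype.card S := Nat.card_eq_fintype_card
        omega
      have h3 : Nat.card (Quotient (A ⊓ B)) ≤
          Nat.card {q : Quotient (A ⊓ B) // q ≠ Quotient.mk (A ⊓ B) c} + 1 := by
        let ψ : Quotient (A ⊓ B) →
            {q : Quotient (A ⊓ B) // q ≠ Quotient.mk (A ⊓ B) c} ⊕ Unit := fun q =>
          if hq : q = Quotient.mk (A ⊓ B) c then Sum.inr () else Sum.inl ⟨q, hq⟩
        have hψ : Injective ψ := by
          intro q q' hqq
          by_cases hq : q = Quotient.mk (A ⊓ B) c <;>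
            by_cases hq' : q' = Quotient.mk (A ⊓ B) c
          · rw [hq, hq']
          · simp [ψ, hq, hq'] at hqq
          · simp [ψ, hq, hq'] at hqq
          · simp only [ψ, dif_neg hq, dif_neg hq', Sum.inl.injEq, Subtype.mk.injEq] at hqq
            exact hqq
        have := Nat.card_le_card_of_injective ψ hψ
        rw [Nat.card_sum] at this
        simpa using this
      omega
  have hsup := supermod A B
  omega
end
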